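/- Let x, y, z be elements of the graph group G_F. If x ≤ z and y ≤ z, then (x ∧ y)⁻¹x ≤ y⁻¹z. -/

import Mathlib

open Pointwise

namespace GraphGroupPaper

/-- The set of commutator relators: `gᵢ` and `gⱼ` commute for every pair of distinct
`i, j` with `{i,j} ∉ F`. -/
def Rels (k : ℕ) (F : Set (Sym2 (Fin k))) : Set (FreeGroup (Fin k)) :=
  {w | ∃ i j : Fin k, i ≠ j ∧ s(i, j) ∉ F ∧
      w = FreeGroup.of i * FreeGroup.of j * (FreeGroup.of i)⁻¹ * (FreeGroup.of j)⁻¹}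

/-- The graph group `G_F` with generators `g₁, …, g_k` and relations `gᵢgⱼ = gⱼgᵢ`
for all distinct `i, j` with `{i,j} ∉ F`. -/
abbrev Grp (k : ℕ) (F : Set (Sym2 (Fin k))) := PresentedGroup (Rels k F)

/-- The generator `gᵢ` of the graph group. -/
def gen (k : ℕ) (F : Set (Sym2 (Fin k))) (i : Fin k) : Grp k F :=
  PresentedGroup.of i

/-- The group element corresponding to a symbol: `(i, true)` stands for `gᵢ`,
`(i, false)` stands for `gᵢ⁻¹`. -/
def sym (k : ℕ) (F : Set (Sym2 (Fin k))) (α : Fin k × Bool) : Grp k F :=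
  if α.2 then gen k F α.1 else (gen k F α.1)⁻¹

/-- The product of the word `l` of symbols, as an element of the graph group. -/
def wordProd (k : ℕ) (F : Set (Sym2 (Fin k))) (l : List (Fin k × Bool)) : Grp k F :=
  (l.map (sym k F)).prod

/-- `|x|` : the length of a shortest word in the symbols representing `x`. -/
noncomputable def len {k : ℕ} {F : Set (Sym2 (Fin k))} (x : Grp k F) : ℕ :=
  sInf {n | ∃ l : List (Fin k × Bool), wordProd k F l = x ∧ l.length = n}

/-- The partial order on `G_F`:  `x ≤ y` iff `|y| = |x| + |x⁻¹y|`. -/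
def le {k : ℕ} {F : Set (Sym2 (Fin k))} (x y : Grp k F) : Prop :=
  len y = len x + len (x⁻¹ * y)

/-- `m` is the meet `x ∧ y` (greatest lower bound w.r.t. `le`). -/
def IsMeet {k : ℕ} {F : Set (Sym2 (Fin k))} (x y m : Grp k F) : Prop :=
  le m x ∧ le m y ∧ ∀ w, le w x → le w y → le w m

/-- `j` is the (finite) join `x ∨ y` (least upper bound w.r.t. `le`);
`x ∨ y` is finite iff such a `j` exists. -/
def IsJoin {k : ℕ} {F : Set (Sym2 (Fin k))} (x y j : Grp k F) : Prop :=
  le x j ∧ le y j ∧ ∀ w, le x w → le y w → le j w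

/-- `j` is the (finite) join of the set `S`. -/
def IsJoinSet {k : ℕ} {F : Set (Sym2 (Fin k))} (S : Set (Grp k F)) (j : Grp k F) : Prop :=
  (∀ s ∈ S, le s j) ∧ ∀ w, (∀ s ∈ S, le s w) → le j w

/-- `y` is a segment of `a` if `a = x·y·z` for some `x, z`. -/
def Segment {k : ℕ} {F : Set (Sym2 (Fin k))} (y a : Grp k F) : Prop :=
  ∃ x z, a = x * y * z ∧ len a = len x + len y + len z

/-- The left-invariant metric `dist(x,y) = |x⁻¹y|`. -/
noncomputable def dist {k : ℕ} {F : Set (Sym2 (Fin k))} (x y : Grp k F) : ℕ :=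
  len (x⁻¹ * y)

/-- A nonempty set `L` is convex if `x, z ∈ L` and `dist(x,y) + dist(y,z) = dist(x,z)`
imply `y ∈ L`. -/
def ConvexSet {k : ℕ} {F : Set (Sym2 (Fin k))} (L : Set (Grp k F)) : Prop :=
  L.Nonempty ∧ ∀ x z y : Grp k F, x ∈ L → z ∈ L →
    dist x y + dist y z = dist x z → y ∈ L

/-- An ideal: nonempty, downward closed, and closed under finite joins. -/
def IdealSet {k : ℕ} {F : Set (Sym2 (Fin k))} (I : Set (Grp k F)) : Prop :=
  I.Nonempty ∧ (∀ x ∈ I, ∀ y, le y x → y ∈ I) ∧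
    (∀ x ∈ I, ∀ y ∈ I, ∀ j, IsJoin x y j → j ∈ I)

/-- `H` is closed if both `H` and `H⁻¹` are ideals. -/
def ClosedSet {k : ℕ} {F : Set (Sym2 (Fin k))} (H : Set (Grp k F)) : Prop :=
  IdealSet H ∧ IdealSet H⁻¹

/-- `m` is a minimal element of `S` w.r.t. `le`. -/
def MinimalIn {k : ℕ} {F : Set (Sym2 (Fin k))} (S : Set (Grp k F)) (m : Grp k F) : Prop :=
  m ∈ S ∧ ∀ x ∈ S, le x m → x = m

/-- `l` is a reduced (i.e. shortest) word representing `x`. -/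
def MinWord {k : ℕ} {F : Set (Sym2 (Fin k))} (x : Grp k F) (l : List (Fin k × Bool)) : Prop :=
  wordProd k F l = x ∧ l.length = len x

open Classical in
/-- `#_α(x)`: the number of occurrences of the symbol `α` (not counting `α⁻¹`)
in a reduced word representing `x`. -/
noncomputable def symCount {k : ℕ} {F : Set (Sym2 (Fin k))} (α : Fin k × Bool)
    (x : Grp k F) : ℕ :=
  if h : ∃ l, MinWord x l then h.choose.count α else 0

/-- The symbol `α` occurs in `x`. -/
def Occurs {k : ℕ} {F : Set (Sym2 (Fin k))} (α : Fin k × Bool) (x : Grp k F) : Prop :=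
  0 < symCount α x

/-- `α` is a maximal symbol of `x`, i.e. `xα⁻¹ ≤ x`. -/
def MaxSym {k : ℕ} {F : Set (Sym2 (Fin k))} (α : Fin k × Bool) (x : Grp k F) : Prop :=
  le (x * (sym k F α)⁻¹) x

/-- A peak: an element with precisely one maximal symbol. -/
def IsPeak {k : ℕ} {F : Set (Sym2 (Fin k))} (p : Grp k F) : Prop :=
  ∃! α : Fin k × Bool, MaxSym α p

/-- An `α`-peak: a peak whose unique maximal symbol is `α`. -/
def AlphaPeak {k : ℕ} {F : Set (Sym2 (Fin k))} (α : Fin k × Bool) (p : Grp k F) : Prop :=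
  MaxSym α p ∧ ∀ β, MaxSym β p → β = α

/-- The set of generator indices occurring in `b`. -/
def Support {k : ℕ} {F : Set (Sym2 (Fin k))} (b : Grp k F) : Set (Fin k) :=
  {i | Occurs (i, true) b ∨ Occurs (i, false) b}

/-- `b` is connected: the generators occurring in `b` induce a connected subgraph of
the graph `([k], F)`. -/
def Conn {k : ℕ} {F : Set (Sym2 (Fin k))} (b : Grp k F) : Prop :=
  (SimpleGraph.induce (Support b) (SimpleGraph.fromEdgeSet F)).Connected

/-- `b` is cyclically reduced: `b ∧ b⁻¹ = 1`. -/
def CycRed {k : ℕ} {F : Set (Sym2 (Fin k))} (b : Grp k F) : Prop :=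
  IsMeet b b⁻¹ 1

section Traces

variable {k : ℕ} (F : Set (Sym2 (Fin k)))

/-- inverse of a symbol -/
def pinv (x : Fin k × Bool) : Fin k × Bool := (x.1, !x.2)

@[simp] lemma pinv_pinv (x : Fin k × Bool) : pinv (pinv x) = x := by
  simp [pinv]

/-- independence of symbols -/
def Ind (x y : Fin k × Bool) : Prop := x.1 ≠ y.1 ∧ s(x.1, y.1) ∉ F

lemma Ind.symm {x y : Fin k × Bool} (h : Ind F x y) : Ind F y x := by
  refine ⟨h.1.symm, ?_⟩
  rw [Sym2.eq_swap]; exact h.2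

lemma ind_self (x : Fin k × Bool) : ¬ Ind F x x := fun h => h.1 rfl

lemma ind_pinv_left {x y : Fin k × Bool} : Ind F (pinv x) y ↔ Ind F x y := by
  simp [Ind, pinv]

lemma ind_pinv_right {x y : Fin k × Bool} : Ind F x (pinv y) ↔ Ind F x y := by
  simp [Ind, pinv]

lemma ind_pinv_self (x : Fin k × Bool) : ¬ Ind F x (pinv x) := by
  rw [ind_pinv_right]; exact ind_self F x

lemma ne_of_ind {x y : Fin k × Bool} (h : Ind F x y) : x ≠ y := by
  intro e; exact h.1 (by rw [e])

/-- one commutation swap -/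
def Step (l m : List (Fin k × Bool)) : Prop :=
  ∃ u v x y, Ind F x y ∧ l = u ++ x :: y :: v ∧ m = u ++ y :: x :: v

lemma Step.symm' {l m : List (Fin k × Bool)} (h : Step F l m) : Step F m l := by
  obtain ⟨u, v, x, y, hxy, hl, hm⟩ := h
  exact ⟨u, v, y, x, hxy.symm, hm, hl⟩

/-- trace equivalence -/
def TEq (l m : List (Fin k × Bool)) : Prop := Relation.ReflTransGen (Step F) l m

lemma TEq.refl (l : List (Fin k × Bool)) : TEq F l l := Relation.ReflTransGen.refl

lemma TEq.trans {l m n : List (Fin k × Bool)} (h : TEq F l m) (h' : TEq F m n) :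
    TEq F l n := Relation.ReflTransGen.trans h h'

lemma TEq.symm {l m : List (Fin k × Bool)} (h : TEq F l m) : TEq F m l :=
  by
    induction h with
    | refl => exact Relation.ReflTransGen.refl
    | tail _ hs ih => exact Relation.ReflTransGen.head (Step.symm' F hs) ih

lemma Step.teq {l m : List (Fin k × Bool)} (h : Step F l m) : TEq F l m :=
  Relation.ReflTransGen.single h

lemma Step.perm {l m : List (Fin k × Bool)} (h : Step F l m) : l.Perm m := by
  obtain ⟨u, v, x, y, _, hl, hm⟩ := h
  subst hl; subst hm
  exact (List.Perm.append_left u (List.Perm.swap y x v))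

lemma TEq.perm {l m : List (Fin k × Bool)} (h : TEq F l m) : l.Perm m := by
  induction h with
  | refl => exact List.Perm.refl _
  | tail _ hs ih => exact ih.trans (Step.perm F hs)

lemma TEq.length_eq {l m : List (Fin k × Bool)} (h : TEq F l m) : l.length = m.length :=
  (h.perm F).length_eq

lemma TEq.cons {l m : List (Fin k × Bool)} (c : Fin k × Bool) (h : TEq F l m) :
    TEq F (c :: l) (c :: m) := by
  induction h with
  | refl => exact TEq.refl F _
  | tail _ hs ih =>
      refine ih.trans F ?_
      obtain ⟨u, v, x, y, hxy, hl, hm⟩ := hs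
      exact Step.teq F ⟨c :: u, v, x, y, hxy, by simp [hl], by simp [hm]⟩

lemma TEq.append_left {l m : List (Fin k × Bool)} (c : List (Fin k × Bool)) (h : TEq F l m) :
    TEq F (c ++ l) (c ++ m) := by
  induction c with
  | nil => simpa using h
  | cons a t ih => exact TEq.cons F a ih

lemma TEq.append_right {l m : List (Fin k × Bool)} (c : List (Fin k × Bool)) (h : TEq F l m) :
    TEq F (l ++ c) (m ++ c) := by
  induction h with
  | refl => exact TEq.refl F _
  | tail _ hs ih =>
      refine ih.trans F ?_
      obtain ⟨u, v, x, y, hxy, hl, hm⟩ := hs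
      exact Step.teq F ⟨u, v ++ c, x, y, hxy, by simp [hl], by simp [hm]⟩

lemma TEq.swap_head {x y : Fin k × Bool} (h : Ind F x y) (l : List (Fin k × Bool)) :
    TEq F (x :: y :: l) (y :: x :: l) :=
  Step.teq F ⟨[], l, x, y, h, rfl, rfl⟩

/-- move a letter independent from everything in `u` to the front -/
lemma teq_middle {x : Fin k × Bool} (u v : List (Fin k × Bool))
    (h : ∀ d ∈ u, Ind F x d) : TEq F (u ++ x :: v) (x :: (u ++ v)) := by
  induction u with
  | nil => exact TEq.refl F _
  | cons a t ih =>
      have h1 : TEq F (a :: (t ++ x :: v)) (a :: x :: (t ++ v)) :=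
        TEq.cons F a (ih (fun d hd => h d (List.mem_cons_of_mem a hd)))
      refine h1.trans F ?_
      exact TEq.swap_head F ((h a List.mem_cons_self).symm F) _

/-- projection to the letters `c`, `d` -/
def pj (c d : Fin k × Bool) (l : List (Fin k × Bool)) : List (Fin k × Bool) :=
  l.filter (fun e => e = c ∨ e = d)

lemma pj_cons (c d e : Fin k × Bool) (l : List (Fin k × Bool)) :
    pj c d (e :: l) = if e = c ∨ e = d then e :: pj c d l else pj c d l := by
  simp only [pj, List.filter]
  by_cases h : e = c ∨ e = d <;> simp [h]

lemma pj_append (c d : Fin k × Bool) (u l : List (Fin k × Bool)) :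
    pj c d (u ++ l) = pj c d u ++ pj c d l := by
  simp [pj, List.filter_append]

lemma Step.pj_eq {l m : List (Fin k × Bool)} (h : Step F l m) (c d : Fin k × Bool)
    (hcd : ¬ Ind F c d) : pj c d l = pj c d m := by
  obtain ⟨u, v, x, y, hxy, hl, hm⟩ := h
  subst hl; subst hm
  have key : pj c d (x :: y :: v) = pj c d (y :: x :: v) := by
    by_cases hx : x = c ∨ x = d <;> by_cases hy : y = c ∨ y = d
    · exfalso
      rcases hx with rfl | rfl <;> rcases hy with rfl | rfl
      · exact ind_self F _ hxy
      · exact hcd hxy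
      · exact hcd (hxy.symm F)
      · exact ind_self F _ hxy
    · rw [pj_cons, if_pos hx, pj_cons, if_neg hy, pj_cons, if_neg hy, pj_cons, if_pos hx]
    · rw [pj_cons, if_neg hx, pj_cons, if_pos hy, pj_cons, if_pos hy, pj_cons, if_neg hx]
    · rw [pj_cons, if_neg hx, pj_cons, if_neg hy, pj_cons, if_neg hy, pj_cons, if_neg hx]
  rw [pj_append, pj_append, key]

lemma TEq.pj_eq {l m : List (Fin k × Bool)} (h : TEq F l m) (c d : Fin k × Bool)
    (hcd : ¬ Ind F c d) : pj c d l = pj c d m := by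
  induction h with
  | refl => rfl
  | tail _ hs ih => exact ih.trans (Step.pj_eq F hs c d hcd)

/-- `c` is a minimal (initial) letter of the trace of `l`, projection criterion -/
def MinL (c : Fin k × Bool) (l : List (Fin k × Bool)) : Prop :=
  ∀ d, ¬ Ind F c d → (pj c d l).head? = some c

lemma minL_cons (c : Fin k × Bool) (l : List (Fin k × Bool)) : MinL F c (c :: l) := by
  intro d hd
  rw [pj_cons, if_pos (Or.inl rfl)]
  rfl

lemma TEq.minL {l m : List (Fin k × Bool)} (h : TEq F l m) {c : Fin k × Bool}
    (hc : MinL F c l) : MinL F c m := by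
  intro d hd
  rw [← h.pj_eq F c d hd]
  exact hc d hd

lemma minL_peel {c : Fin k × Bool} {l : List (Fin k × Bool)} (h : MinL F c l) :
    ∃ w, TEq F l (c :: w) := by
  induction l with
  | nil =>
      exfalso
      have := h c (ind_self F c)
      simp [pj] at this
  | cons e t ih =>
      by_cases hec : e = c
      · subst hec; exact ⟨t, TEq.refl F _⟩
      · have hind : Ind F c e := by
          by_contra hne
          have := h e hne
          rw [pj_cons, if_pos (Or.inr rfl)] at this
          simp at this
          exact hec this
        have hct : MinL F c t := by
          intro d hd
          have := h d hd
          have hed : ¬ (e = c ∨ e = d) := by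
            rintro (h1 | h1)
            · exact hec h1
            · subst h1; exact hd hind
          rwa [pj_cons, if_neg hed] at this
        obtain ⟨w, hw⟩ := ih hct
        refine ⟨e :: w, ?_⟩
        exact (TEq.cons F e hw).trans F (TEq.swap_head F (hind.symm F) w)

/-- backward direction: equal projections imply trace equivalence -/
lemma pj_eq_teq : ∀ n (l m : List (Fin k × Bool)), l.length ≤ n →
    (∀ c d, ¬ Ind F c d → pj c d l = pj c d m) → TEq F l m := by
  intro n
  induction n with
  | zero =>
      intro l m hl h
      have hl0 : l = [] := List.length_eq_zero_iff.mp (Nat.le_zero.mp hl)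
      subst hl0
      cases m with
      | nil => exact TEq.refl F _
      | cons e t =>
          exfalso
          have := h e e (ind_self F e)
          rw [pj_cons, if_pos (Or.inl rfl)] at this
          simp [pj] at this
  | succ n ih =>
      intro l m hl h
      cases l with
      | nil =>
          cases m with
          | nil => exact TEq.refl F _
          | cons e t =>
              exfalso
              have := h e e (ind_self F e)
              rw [pj_cons, if_pos (Or.inl rfl)] at this
              simp [pj] at this
      | cons c t =>
          have hminm : MinL F c m := by
            intro d hd
            rw [← h c d hd, pj_cons, if_pos (Or.inl rfl)]
            rfl
          obtain ⟨w, hw⟩ := minL_peel F hminm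
          have hproj : ∀ c' d', ¬ Ind F c' d' → pj c' d' t = pj c' d' w := by
            intro c' d' hcd
            have h1 := h c' d' hcd
            have h2 := hw.pj_eq F c' d' hcd
            rw [h2] at h1
            rw [pj_cons, pj_cons] at h1
            by_cases hc : c = c' ∨ c = d'
            · rw [if_pos hc, if_pos hc] at h1
              exact List.cons_injective h1
            · rwa [if_neg hc, if_neg hc] at h1
          have ht : TEq F t w := ih t w (by simpa using Nat.lt_succ_iff.mp (Nat.lt_of_lt_of_le (by simp) hl)) hproj
          exact ((TEq.cons F c ht).trans F (hw.symm F))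

lemma pj_eq_teq' {l m : List (Fin k × Bool)}
    (h : ∀ c d, ¬ Ind F c d → pj c d l = pj c d m) : TEq F l m :=
  pj_eq_teq F l.length l m le_rfl h

/-- left cancellation for traces -/
lemma teq_cancel {c : Fin k × Bool} {u v : List (Fin k × Bool)}
    (h : TEq F (c :: u) (c :: v)) : TEq F u v := by
  apply pj_eq_teq' F
  intro c' d' hcd
  have h1 := h.pj_eq F c' d' hcd
  rw [pj_cons, pj_cons] at h1
  by_cases hc : c = c' ∨ c = d'
  · rw [if_pos hc, if_pos hc] at h1
    exact List.cons_injective h1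
  · rwa [if_neg hc, if_neg hc] at h1

/-- the key "Levi" lemma on heads -/
lemma teq_two_heads {x y : Fin k × Bool} {u v : List (Fin k × Bool)} (hxy : x ≠ y)
    (h : TEq F (x :: u) (y :: v)) :
    Ind F x y ∧ ∃ w, TEq F u (y :: w) ∧ TEq F v (x :: w) := by
  have hind : Ind F x y := by
    by_contra hni
    have h1 := h.pj_eq F x y hni
    rw [pj_cons, if_pos (Or.inl rfl), pj_cons, if_pos (Or.inr rfl)] at h1
    injection h1 with h1a h1b
    exact hxy h1a
  have hminxv : MinL F x (y :: v) := (h.minL F (minL_cons F x u))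
  -- peel x out of v
  have hminxv' : MinL F x v := by
    intro d hd
    have := hminxv d hd
    have hy : ¬ (y = x ∨ y = d) := by
      rintro (h1 | h1)
      · exact hxy h1.symm
      · subst h1; exact hd hind
    rwa [pj_cons, if_neg hy] at this
  obtain ⟨w, hw⟩ := minL_peel F hminxv'
  refine ⟨hind, w, ?_, hw⟩
  have : TEq F (y :: v) (x :: y :: w) :=
    (TEq.cons F y hw).trans F (TEq.swap_head F (hind.symm F) w)
  have h2 : TEq F (x :: u) (x :: y :: w) := h.trans F this
  exact teq_cancel F h2

lemma minL_of_cons_ne {x c : Fin k × Bool} {t : List (Fin k × Bool)}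
    (hmin : ∃ w, TEq F (c :: t) (x :: w)) (hxc : x ≠ c) :
    Ind F x c ∧ ∃ w', TEq F t (x :: w') := by
  obtain ⟨w, hw⟩ := hmin
  obtain ⟨hind, w', h1, h2⟩ := teq_two_heads F (fun h => hxc h.symm) hw
  exact ⟨hind.symm F, w', h1⟩

/-- if `x` is a head of `u ++ m` then it is a head of `u`, or independent from all of `u`
and a head of `m`. -/
lemma head_of_append {x : Fin k × Bool} : ∀ (u m w : List (Fin k × Bool)),
    TEq F (u ++ m) (x :: w) →
    (∃ u', TEq F u (x :: u')) ∨ ((∀ d ∈ u, Ind F x d) ∧ ∃ m', TEq F m (x :: m')) := by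
  intro u
  induction u with
  | nil => intro m w h; exact Or.inr ⟨by simp, w, h⟩
  | cons c t ih =>
      intro m w h
      by_cases hxc : x = c
      · subst hxc; exact Or.inl ⟨t, TEq.refl F _⟩
      · obtain ⟨hind, w', hw'⟩ := minL_of_cons_ne F ⟨w, h⟩ hxc
        rcases ih m w' hw' with ⟨u', hu'⟩ | ⟨hall, m', hm'⟩
        · left
          refine ⟨c :: u', ?_⟩
          exact (TEq.cons F c hu').trans F (TEq.swap_head F (hind.symm F) u')
        · right
          refine ⟨?_, m', hm'⟩
          intro d hd
          rcases List.mem_cons.mp hd with h1 | h1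
          · subst h1; exact hind
          · exact hall d h1

end Traces


section Model

variable {k : ℕ} (F : Set (Sym2 (Fin k)))

/-- reducedness of a word, up to commutations -/
def RedL (l : List (Fin k × Bool)) : Prop :=
  ¬ ∃ u v x, TEq F l (u ++ x :: pinv x :: v)

lemma TEq.redL {l m : List (Fin k × Bool)} (h : TEq F l m) (hr : RedL F l) : RedL F m := by
  rintro ⟨u, v, x, hm⟩
  exact hr ⟨u, v, x, h.trans F hm⟩

lemma redL_nil : RedL F ([] : List (Fin k × Bool)) := by
  rintro ⟨u, v, x, h⟩
  have := h.length_eq F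
  simp at this

lemma redL_tail {x : Fin k × Bool} {w : List (Fin k × Bool)} {l : List (Fin k × Bool)}
    (hl : RedL F l) (h : TEq F l (x :: w)) : RedL F w := by
  rintro ⟨u, v, y, hw⟩
  exact hl ⟨x :: u, v, y, h.trans F (TEq.cons F x hw)⟩

/-- appending a letter to a reduced trace with no cancellable partner stays reduced -/
lemma redL_cons {x : Fin k × Bool} {l : List (Fin k × Bool)}
    (hl : RedL F l) (hnc : ¬ ∃ w, TEq F l (pinv x :: w)) : RedL F (x :: l) := by
  rintro ⟨u, v, y, h⟩
  rcases head_of_append F u (y :: pinv y :: v) _ (h.symm F) with ⟨u', hu'⟩ | ⟨hallu, m', hm'⟩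
  · -- cancel x from u
    have h2 : TEq F (x :: l) (x :: (u' ++ y :: pinv y :: v)) :=
      h.trans F (TEq.append_right F (y :: pinv y :: v) hu')
    exact hl ⟨u', v, y, teq_cancel F h2⟩
  · -- x is a head of y :: pinv y :: v
    by_cases hxy : x = y
    · -- cancellation against pinv y = pinv x
      subst hxy
      have h2 : TEq F (u ++ x :: pinv x :: v) (x :: (u ++ pinv x :: v)) :=
        teq_middle F u (pinv x :: v) hallu
      have h3 := teq_cancel F (h.trans F h2)
      have h4 : TEq F (u ++ pinv x :: v) (pinv x :: (u ++ v)) :=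
        teq_middle F u v (fun d hd => (ind_pinv_left F).mpr (hallu d hd))
      exact hnc ⟨u ++ v, h3.trans F h4⟩
    · obtain ⟨hind1, w2, hw2⟩ := minL_of_cons_ne F ⟨m', hm'⟩ hxy
      by_cases hxy' : x = pinv y
      · exfalso
        subst hxy'
        exact (ind_pinv_left F).mp hind1 |>.symm F |> (ind_pinv_self F y)
      · obtain ⟨hind2, v', hv'⟩ := minL_of_cons_ne F ⟨w2, hw2⟩ hxy'
        -- v ~ x :: v' hence l ~ u ++ y :: pinv y :: v' after cancelling x
        have h2 : TEq F (u ++ y :: pinv y :: v) ((u ++ [y, pinv y]) ++ x :: v') := by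
          have : TEq F v (x :: v') := hv'
          have := TEq.append_left F (u ++ [y, pinv y]) this
          simpa using this
        have h3 : TEq F ((u ++ [y, pinv y]) ++ x :: v') (x :: ((u ++ [y, pinv y]) ++ v')) := by
          refine teq_middle F _ _ ?_
          intro d hd
          rcases List.mem_append.mp hd with hd | hd
          · exact hallu d hd
          · rcases List.mem_cons.mp hd with rfl | hd
            · exact hind1
            · rcases List.mem_cons.mp hd with rfl | hd
              · exact hind2
              · simp at hd
        have h4 := teq_cancel F ((h.trans F h2).trans F h3)
        refine hl ⟨u, v', y, h4.trans F ?_⟩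
        simp [TEq.refl]
  done

/-- the trace monoid -/
def tsetoid : Setoid (List (Fin k × Bool)) :=
  ⟨TEq F, ⟨TEq.refl F, fun h => h.symm F, fun h h' => h.trans F h'⟩⟩

def Trace := Quotient (tsetoid F)

def mkT (l : List (Fin k × Bool)) : Trace F := Quotient.mk (tsetoid F) l

lemma mkT_eq_iff {l m : List (Fin k × Bool)} : mkT F l = mkT F m ↔ TEq F l m :=
  ⟨fun h => Quotient.exact h, fun h => Quotient.sound (s := tsetoid F) h⟩

def RedT : Trace F → Prop :=
  Quotient.lift (RedL F) (fun l m h => propext ⟨fun hr => TEq.redL F h hr, fun hr => TEq.redL F (TEq.symm F h) hr⟩)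

lemma redT_mk {l : List (Fin k × Bool)} : RedT F (mkT F l) ↔ RedL F l := Iff.rfl

/-- reduced traces -/
def RTr := {t : Trace F // RedT F t}

open Classical in
/-- multiply a word by a letter on the left, with cancellation -/
noncomputable def mulL (x : Fin k × Bool) (l : List (Fin k × Bool)) : List (Fin k × Bool) :=
  if h : ∃ w, TEq F l (pinv x :: w) then h.choose else x :: l

lemma mulL_del {x : Fin k × Bool} {l : List (Fin k × Bool)}
    (h : ∃ w, TEq F l (pinv x :: w)) :
    TEq F l (pinv x :: mulL F x l) := by
  rw [mulL, dif_pos h]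
  exact h.choose_spec

lemma mulL_del_eq {x : Fin k × Bool} {l w : List (Fin k × Bool)}
    (h : TEq F l (pinv x :: w)) : TEq F (mulL F x l) w :=
  teq_cancel F (((mulL_del F ⟨w, h⟩).symm F).trans F h)

lemma mulL_app {x : Fin k × Bool} {l : List (Fin k × Bool)}
    (h : ¬ ∃ w, TEq F l (pinv x :: w)) : mulL F x l = x :: l := by
  rw [mulL, dif_neg h]

lemma mulL_resp {x : Fin k × Bool} {l m : List (Fin k × Bool)} (h : TEq F l m) :
    TEq F (mulL F x l) (mulL F x m) := by
  by_cases hd : ∃ w, TEq F l (pinv x :: w)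
  · obtain ⟨w, hw⟩ := hd
    have h1 := mulL_del_eq F hw
    have h2 := mulL_del_eq F ((h.symm F).trans F hw)
    exact h1.trans F (h2.symm F)
  · have hd' : ¬ ∃ w, TEq F m (pinv x :: w) := by
      rintro ⟨w, hw⟩; exact hd ⟨w, h.trans F hw⟩
    rw [mulL_app F hd, mulL_app F hd']
    exact TEq.cons F x h

noncomputable def mulT (x : Fin k × Bool) : Trace F → Trace F :=
  Quotient.lift (fun l => mkT F (mulL F x l))
    (fun l m h => (mkT_eq_iff F).mpr (mulL_resp F h))

lemma mulT_mk (x : Fin k × Bool) (l : List (Fin k × Bool)) :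
    mulT F x (mkT F l) = mkT F (mulL F x l) := rfl

lemma redL_mulL {x : Fin k × Bool} {l : List (Fin k × Bool)} (hl : RedL F l) :
    RedL F (mulL F x l) := by
  by_cases hd : ∃ w, TEq F l (pinv x :: w)
  · exact redL_tail F hl (mulL_del F hd)
  · rw [mulL_app F hd]
    exact redL_cons F hl hd

noncomputable def mulRT (x : Fin k × Bool) (t : RTr F) : RTr F :=
  ⟨mulT F x t.1, by
    obtain ⟨t, ht⟩ := t
    induction t using Quotient.inductionOn with
    | h l => exact redL_mulL F ht⟩

lemma mulRT_mk (x : Fin k × Bool) (l : List (Fin k × Bool)) (h : RedL F l) :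
    (mulRT F x ⟨mkT F l, h⟩).1 = mkT F (mulL F x l) := rfl

lemma mulRT_inv (x : Fin k × Bool) (t : RTr F) :
    mulRT F (pinv x) (mulRT F x t) = t := by
  obtain ⟨t, ht⟩ := t
  induction t using Quotient.inductionOn with
  | h l =>
    apply Subtype.ext
    show (mulT F (pinv x) (mulT F x (mkT F l))) = mkT F l
    rw [mulT_mk, mulT_mk]
    apply (mkT_eq_iff F).mpr
    by_cases hd : ∃ w, TEq F l (pinv x :: w)
    · -- deletion then re-append
      have h1 := mulL_del F hd
      have hnc : ¬ ∃ w, TEq F (mulL F x l) (pinv (pinv x) :: w) := by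
        rintro ⟨w, hw⟩
        rw [pinv_pinv] at hw
        exact ht ⟨[], w, pinv x, h1.trans F (TEq.cons F (pinv x) hw) |>.trans F (by rw [pinv_pinv]; exact TEq.refl F _)⟩
      rw [mulL_app F hnc]
      exact (TEq.cons F (pinv x) (TEq.refl F _)).trans F (h1.symm F)
    · rw [mulL_app F hd]
      have hex : TEq F (x :: l) (pinv (pinv x) :: l) := by
        rw [pinv_pinv]; exact TEq.refl F _
      exact mulL_del_eq F hex
  done

/-- letters act by permutations on reduced traces -/
noncomputable def letterPerm (x : Fin k × Bool) : Equiv.Perm (RTr F) :=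
  ⟨mulRT F x, mulRT F (pinv x), fun t => mulRT_inv F x t, fun t => by
    have := mulRT_inv F (pinv x) t
    rwa [pinv_pinv] at this⟩

lemma letterPerm_inv (x : Fin k × Bool) :
    (letterPerm F x)⁻¹ = letterPerm F (pinv x) := by
  apply Equiv.ext
  intro t
  rfl

/-- commutation at the list level -/
lemma mulL_comm_aux {x y : Fin k × Bool} (hxy : Ind F x y) (l : List (Fin k × Bool))
    (hd : ∃ w, TEq F l (pinv x :: w)) :
    TEq F (mulL F x (mulL F y l)) (mulL F y (mulL F x l)) := by
  have hpxy : pinv x ≠ y := by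
    intro h; rw [← h, ind_pinv_right] at hxy; exact ind_self F x hxy
  have hpyx : pinv y ≠ x := by
    intro h; rw [← h, ind_pinv_left] at hxy; exact ind_self F y hxy
  have hpp : pinv x ≠ pinv y := by
    intro h
    have : x = y := by simpa using congrArg pinv h
    exact ne_of_ind F hxy this
  by_cases hdy : ∃ w, TEq F l (pinv y :: w)
  · -- both delete
    obtain ⟨w0, hw0⟩ := hd
    obtain ⟨u0, hu0⟩ := hdy
    obtain ⟨hind, w, hww, hwu⟩ := teq_two_heads F hpp ((hw0.symm F).trans F hu0)
    -- w0 ~ pinv y :: w, u0 ~ pinv x :: w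
    have e1 : TEq F (mulL F x l) w0 := mulL_del_eq F hw0
    have e2 : TEq F (mulL F y l) u0 := mulL_del_eq F hu0
    have hx2 : TEq F (mulL F y l) (pinv x :: w) := e2.trans F hwu
    have hy2 : TEq F (mulL F x l) (pinv y :: w) := e1.trans F hww
    exact (mulL_del_eq F hx2).trans F ((mulL_del_eq F hy2).symm F)
  · -- x deletes, y appends
    obtain ⟨w0, hw0⟩ := hd
    have e1 : TEq F (mulL F x l) w0 := mulL_del_eq F hw0
    have hdy' : ¬ ∃ w, TEq F (mulL F x l) (pinv y :: w) := by
      rintro ⟨w, hw⟩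
      refine hdy ⟨pinv x :: w, ?_⟩
      refine (hw0.trans F (TEq.cons F (pinv x) ((e1.symm F).trans F hw))).trans F ?_
      exact TEq.swap_head F ((ind_pinv_left F).mpr ((ind_pinv_right F).mpr hxy)) w
    rw [mulL_app F hdy']
    -- other side : mulL y l = y :: l, which has head pinv x
    have hdyl : ¬ ∃ w, TEq F l (pinv y :: w) := hdy
    rw [mulL_app F hdyl]
    have hyx : TEq F (y :: l) (pinv x :: y :: w0) := by
      refine (TEq.cons F y hw0).trans F ?_
      exact TEq.swap_head F ((ind_pinv_right F).mpr (hxy.symm F)) w0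
    exact (mulL_del_eq F hyx).trans F (TEq.cons F y (e1.symm F))

lemma mulL_comm {x y : Fin k × Bool} (hxy : Ind F x y) (l : List (Fin k × Bool)) :
    TEq F (mulL F x (mulL F y l)) (mulL F y (mulL F x l)) := by
  by_cases hdx : ∃ w, TEq F l (pinv x :: w)
  · exact mulL_comm_aux F hxy l hdx
  · by_cases hdy : ∃ w, TEq F l (pinv y :: w)
    · exact (mulL_comm_aux F (hxy.symm F) l hdy).symm F
    · -- both append
      rw [mulL_app F hdy]
      have hdx' : ¬ ∃ w, TEq F (y :: l) (pinv x :: w) := by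
        rintro ⟨w, hw⟩
        have hne : pinv x ≠ y := by
          intro h; rw [← h, ind_pinv_right] at hxy; exact ind_self F x hxy
        obtain ⟨_, w', hw'⟩ := minL_of_cons_ne F ⟨w, hw.symm F |>.symm F⟩ hne
        exact hdx ⟨w', hw'⟩
      rw [mulL_app F hdx', mulL_app F hdx]
      have hdy' : ¬ ∃ w, TEq F (x :: l) (pinv y :: w) := by
        rintro ⟨w, hw⟩
        have hne : pinv y ≠ x := by
          intro h; rw [← h, ind_pinv_left] at hxy; exact ind_self F y hxy
        obtain ⟨_, w', hw'⟩ := minL_of_cons_ne F ⟨w, hw⟩ hne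
        exact hdy ⟨w', hw'⟩
      rw [mulL_app F hdy']
      exact TEq.swap_head F hxy l

lemma mulRT_comm {x y : Fin k × Bool} (hxy : Ind F x y) (t : RTr F) :
    mulRT F x (mulRT F y t) = mulRT F y (mulRT F x t) := by
  obtain ⟨t, ht⟩ := t
  induction t using Quotient.inductionOn with
  | h l =>
    apply Subtype.ext
    show mulT F x (mulT F y (mkT F l)) = mulT F y (mulT F x (mkT F l))
    rw [mulT_mk, mulT_mk, mulT_mk, mulT_mk]
    exact (mkT_eq_iff F).mpr (mulL_comm F hxy l)

end Model

section GroupBasics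

variable {k : ℕ} {F : Set (Sym2 (Fin k))}

lemma wordProd_nil : wordProd k F [] = 1 := rfl

lemma wordProd_cons (x : Fin k × Bool) (l : List (Fin k × Bool)) :
    wordProd k F (x :: l) = sym k F x * wordProd k F l := by
  simp [wordProd]

lemma wordProd_append (l m : List (Fin k × Bool)) :
    wordProd k F (l ++ m) = wordProd k F l * wordProd k F m := by
  simp [wordProd]

lemma sym_mul_pinv (x : Fin k × Bool) : sym k F x * sym k F (pinv x) = 1 := by
  rcases x with ⟨i, b⟩
  cases b <;> simp [sym, pinv]

lemma pinv_mul_sym (x : Fin k × Bool) : sym k F (pinv x) * sym k F x = 1 := by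
  rcases x with ⟨i, b⟩
  cases b <;> simp [sym, pinv]

lemma sym_pinv (x : Fin k × Bool) : sym k F (pinv x) = (sym k F x)⁻¹ := by
  rcases x with ⟨i, b⟩
  cases b <;> simp [sym, pinv]

lemma commute_gen {i j : Fin k} (hij : i ≠ j) (hF : s(i, j) ∉ F) :
    Commute (gen k F i) (gen k F j) := by
  have hmem : (FreeGroup.of i * FreeGroup.of j * (FreeGroup.of i)⁻¹ * (FreeGroup.of j)⁻¹ :
      FreeGroup (Fin k)) ∈ Subgroup.normalClosure (Rels k F) :=
    Subgroup.subset_normalClosure ⟨i, j, hij, hF, rfl⟩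
  have h1 : (gen k F i) * (gen k F j) * (gen k F i)⁻¹ * (gen k F j)⁻¹ = 1 := by
    have := (QuotientGroup.eq_one_iff _).mpr hmem
    exact this
  have h2 := mul_inv_eq_one.mp h1
  exact mul_inv_eq_iff_eq_mul.mp h2

lemma sym_comm {x y : Fin k × Bool} (h : Ind F x y) :
    Commute (sym k F x) (sym k F y) := by
  have hc : Commute (gen k F x.1) (gen k F y.1) := commute_gen h.1 h.2
  rcases x with ⟨i, bi⟩
  rcases y with ⟨j, bj⟩
  cases bi <;> cases bj <;> simp only [sym, if_true, if_false, Bool.false_eq_true] <;>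
    first
      | exact hc
      | exact hc.inv_left
      | exact hc.inv_right
      | exact hc.inv_left.inv_right

lemma Step.wordProd_eq {l m : List (Fin k × Bool)} (h : Step F l m) :
    wordProd k F l = wordProd k F m := by
  obtain ⟨u, v, x, y, hxy, hl, hm⟩ := h
  subst hl; subst hm
  rw [wordProd_append, wordProd_append, wordProd_cons, wordProd_cons, wordProd_cons,
    wordProd_cons, ← mul_assoc, ← mul_assoc, ← mul_assoc, ← mul_assoc]
  congr 1
  rw [mul_assoc, mul_assoc, (sym_comm hxy).eq]

lemma TEq.wordProd_eq {l m : List (Fin k × Bool)} (h : TEq F l m) :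
    wordProd k F l = wordProd k F m := by
  induction h with
  | refl => rfl
  | tail _ hs ih => exact ih.trans (Step.wordProd_eq hs)

lemma exists_word (g : Grp k F) : ∃ l, wordProd k F l = g := by
  obtain ⟨f, rfl⟩ := QuotientGroup.mk_surjective g
  refine FreeGroup.induction_on
    (C := fun f => ∃ l, wordProd k F l = QuotientGroup.mk f) f ⟨[], rfl⟩
    (fun i => ⟨[(i, true)], ?_⟩) (fun i _ => ⟨[(i, false)], ?_⟩) ?_
  · rw [wordProd_cons, wordProd_nil, mul_one]; rfl
  · rw [wordProd_cons, wordProd_nil, mul_one]; rfl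
  · rintro a b ⟨la, ha⟩ ⟨lb, hb⟩
    exact ⟨la ++ lb, by rw [wordProd_append, ha, hb]; rfl⟩

lemma len_set_nonempty (g : Grp k F) :
    {n | ∃ l : List (Fin k × Bool), wordProd k F l = g ∧ l.length = n}.Nonempty := by
  obtain ⟨l, hl⟩ := exists_word g
  exact ⟨l.length, l, hl, rfl⟩

lemma len_le {g : Grp k F} {l : List (Fin k × Bool)} (h : wordProd k F l = g) :
    len g ≤ l.length := Nat.sInf_le ⟨l, h, rfl⟩

lemma exists_geodesic (g : Grp k F) :
    ∃ l, wordProd k F l = g ∧ l.length = len g :=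
  Nat.sInf_mem (len_set_nonempty g)

lemma len_one : len (1 : Grp k F) = 0 :=
  Nat.le_zero.mp (len_le (l := []) rfl)

lemma eq_one_of_len {g : Grp k F} (h : len g = 0) : g = 1 := by
  obtain ⟨l, hl, hlen⟩ := exists_geodesic g
  rw [h] at hlen
  rw [List.length_eq_zero_iff.mp hlen] at hl
  exact hl.symm

lemma len_mul_le (g h : Grp k F) : len (g * h) ≤ len g + len h := by
  obtain ⟨l, hl, hlen⟩ := exists_geodesic g
  obtain ⟨m, hm, hmlen⟩ := exists_geodesic h
  have : wordProd k F (l ++ m) = g * h := by rw [wordProd_append, hl, hm]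
  calc len (g * h) ≤ (l ++ m).length := len_le this
    _ = len g + len h := by simp [hlen, hmlen]

lemma len_sym_le (x : Fin k × Bool) : len (sym k F x) ≤ 1 :=
  len_le (l := [x]) (by simp [wordProd])

end GroupBasics

section Hom

variable {k : ℕ} {F : Set (Sym2 (Fin k))}

noncomputable def phi : Grp k F →* Equiv.Perm (RTr F) :=
  PresentedGroup.toGroup (f := fun i => letterPerm F (i, true)) (by
    rintro r ⟨i, j, hij, hF, rfl⟩
    simp only [map_mul, map_inv, FreeGroup.lift_apply_of]
    have hcomm : letterPerm F (i, true) * letterPerm F (j, true)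
        = letterPerm F (j, true) * letterPerm F (i, true) := by
      apply Equiv.ext
      intro t
      simp only [Equiv.Perm.mul_apply]
      exact mulRT_comm F ⟨hij, hF⟩ t
    rw [hcomm]
    group)

lemma phi_gen (i : Fin k) : (phi (F := F)) (gen k F i) = letterPerm F (i, true) :=
  PresentedGroup.toGroup.of _

lemma phi_sym (x : Fin k × Bool) : (phi (F := F)) (sym k F x) = letterPerm F x := by
  rcases x with ⟨i, b⟩
  cases b
  · show phi ((gen k F i)⁻¹) = _
    rw [map_inv, phi_gen, letterPerm_inv]
    rfl
  · exact phi_gen i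

noncomputable def emptyRT : RTr F := ⟨mkT F [], redL_nil F⟩

noncomputable def NF (g : Grp k F) : RTr F := (phi g) (emptyRT)

lemma NF_sym_mul (x : Fin k × Bool) (g : Grp k F) :
    NF (sym k F x * g) = mulRT F x (NF g) := by
  unfold NF
  rw [map_mul, Equiv.Perm.mul_apply, phi_sym]
  rfl

noncomputable def tprodAux : Trace F → Grp k F :=
  Quotient.lift (wordProd k F) (fun a b h => TEq.wordProd_eq (show TEq F a b from h))

noncomputable def tprod (t : RTr F) : Grp k F := tprodAux t.1

def tlenAux : Trace F → ℕ :=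
  Quotient.lift (List.length) (fun a b h => TEq.length_eq F (show TEq F a b from h))

noncomputable def tlen (t : RTr F) : ℕ := tlenAux t.1

lemma tprod_mk (l : List (Fin k × Bool)) (h : RedT F (mkT F l)) :
    tprod (⟨mkT F l, h⟩ : RTr F) = wordProd k F l := rfl

lemma tlen_mk (l : List (Fin k × Bool)) (h : RedT F (mkT F l)) :
    tlen (⟨mkT F l, h⟩ : RTr F) = l.length := rfl

lemma RTr_rep (t : RTr F) : ∃ (l : List (Fin k × Bool)) (h : RedT F (mkT F l)),
    t = ⟨mkT F l, h⟩ := by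
  obtain ⟨tv, ht⟩ := t
  obtain ⟨l, hl⟩ := Quotient.exists_rep tv
  subst hl
  exact ⟨l, ht, rfl⟩

lemma mulRT_mk2 (x : Fin k × Bool) (l : List (Fin k × Bool)) (h : RedT F (mkT F l)) :
    mulRT F x ⟨mkT F l, h⟩
      = ⟨mkT F (mulL F x l), redL_mulL F (h : RedL F l)⟩ :=
  Subtype.ext rfl

lemma tprod_mulRT (x : Fin k × Bool) (t : RTr F) :
    tprod (mulRT F x t) = sym k F x * tprod t := by
  obtain ⟨l, hr, rfl⟩ := RTr_rep t
  show wordProd k F (mulL F x l) = sym k F x * wordProd k F l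
  by_cases hd : ∃ w, TEq F l (pinv x :: w)
  · have h1 := mulL_del F hd
    have h2 := h1.wordProd_eq
    rw [wordProd_cons] at h2
    rw [h2, ← mul_assoc, sym_mul_pinv, one_mul]
  · rw [mulL_app F hd, wordProd_cons]

lemma tlen_mulRT_le (x : Fin k × Bool) (t : RTr F) :
    tlen (mulRT F x t) ≤ tlen t + 1 := by
  obtain ⟨l, hr, rfl⟩ := RTr_rep t
  show (mulL F x l).length ≤ l.length + 1
  by_cases hd : ∃ w, TEq F l (pinv x :: w)
  · have h1 := (mulL_del F hd).length_eq F
    simp at h1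
    omega
  · rw [mulL_app F hd]
    simp

def mkG : FreeGroup (Fin k) → Grp k F := QuotientGroup.mk

lemma mkG_surj : Function.Surjective (mkG (k := k) (F := F)) :=
  QuotientGroup.mk_surjective

lemma tprod_phi (g : Grp k F) (t : RTr F) : tprod ((phi g) t) = g * tprod t := by
  obtain ⟨f, rfl⟩ := mkG_surj g
  revert t
  refine FreeGroup.induction_on
    (C := fun f => ∀ t, tprod (((phi (F := F)) (mkG f)) t)
      = mkG f * tprod t) f ?_ ?_ ?_ ?_
  · intro t
    rw [show (mkG (1 : FreeGroup (Fin k)) : Grp k F) = 1 from rfl, map_one]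
    simp
  · intro i t
    rw [show (mkG (FreeGroup.of i) : Grp k F) = sym k F (i, true) from rfl, phi_sym]
    exact tprod_mulRT (i, true) t
  · intro i _ t
    rw [show (mkG ((FreeGroup.of i)⁻¹) : Grp k F) = sym k F (i, false) from rfl, phi_sym]
    exact tprod_mulRT (i, false) t
  · intro a b ha hb t
    rw [show (mkG (a * b) : Grp k F) = mkG a * mkG b from rfl,
      map_mul, Equiv.Perm.mul_apply, ha, hb, mul_assoc]

lemma tprod_NF (g : Grp k F) : tprod (NF g) = g := by
  unfold NF
  rw [tprod_phi]
  show g * wordProd k F [] = g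
  simp [wordProd_nil]

lemma NF_one : (NF (1 : Grp k F)) = emptyRT := by
  unfold NF
  rw [map_one]
  rfl

lemma tlen_NF_le (l : List (Fin k × Bool)) : tlen (NF (wordProd k F l)) ≤ l.length := by
  induction l with
  | nil => rw [wordProd_nil, NF_one]; exact le_rfl
  | cons x t ih =>
      rw [wordProd_cons, NF_sym_mul]
      calc tlen (mulRT F x (NF (wordProd k F t))) ≤ tlen (NF (wordProd k F t)) + 1 :=
            tlen_mulRT_le x _
        _ ≤ t.length + 1 := by omega
        _ = (x :: t).length := by simp

lemma tlen_NF (g : Grp k F) : tlen (NF g) = len g := by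
  apply le_antisymm
  · obtain ⟨l, hl, hlen⟩ := exists_geodesic g
    calc tlen (NF g) = tlen (NF (wordProd k F l)) := by rw [hl]
      _ ≤ l.length := tlen_NF_le l
      _ = len g := hlen
  · obtain ⟨l, hr, heq⟩ := RTr_rep (NF g)
    have h1 : wordProd k F l = g := by
      rw [← tprod_NF (g := g), heq, tprod_mk]
    have h2 : tlen (NF g) = l.length := by rw [heq, tlen_mk]
    rw [h2]
    exact len_le h1

/-- every geodesic word for `g` represents the normal-form trace of `g` -/
lemma NF_geodesic : ∀ (l : List (Fin k × Bool)) (g : Grp k F), wordProd k F l = g →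
    l.length = len g → (NF g).1 = mkT F l := by
  intro l
  induction l with
  | nil =>
      intro g hg hlen
      have : g = 1 := by rw [← hg]; rfl
      subst this
      rw [NF_one]
      rfl
  | cons x t ih =>
      intro g hg hlen
      set g' := wordProd k F t with hg'
      have hlt : len g' = t.length := by
        have h1 : len g' ≤ t.length := len_le rfl
        by_contra hne
        have h2 : len g' < t.length := lt_of_le_of_ne h1 hne
        obtain ⟨m, hm, hmlen⟩ := exists_geodesic g'
        have : wordProd k F (x :: m) = g := by
          rw [wordProd_cons, hm, ← hg, wordProd_cons]
        have h3 := len_le this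
        simp at h3
        rw [← hlen] at h3
        simp at h3
        omega
      have hNt : (NF g').1 = mkT F t := ih g' rfl hlt.symm
      have hNg : NF g = mulRT F x (NF g') := by
        rw [← hg, wordProd_cons, NF_sym_mul]
      -- rule out the cancellation branch by length
      have hlg : tlen (NF g) = t.length + 1 := by
        rw [tlen_NF, ← hlen]
        simp
      rw [hNg]
      have hred : RedL F t := by
        have := (NF g').2
        rw [hNt] at this
        exact this
      have : mulRT F x (NF g') = mulRT F x ⟨mkT F t, hred⟩ := by
        congr 1
        exact Subtype.ext hNt
      rw [this]
      show mkT F (mulL F x t) = mkT F (x :: t)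
      by_cases hd : ∃ w, TEq F t (pinv x :: w)
      · exfalso
        have h1 := (mulL_del F hd).length_eq F
        have h2 : tlen (mulRT F x ⟨mkT F t, hred⟩) = (mulL F x t).length := rfl
        rw [← this, ← hNg] at h2
        rw [hlg] at h2
        simp at h1
        omega
      · rw [mulL_app F hd]

lemma geodesics_teq {l m : List (Fin k × Bool)} {g : Grp k F}
    (hl : wordProd k F l = g) (hllen : l.length = len g)
    (hm : wordProd k F m = g) (hmlen : m.length = len g) : TEq F l m := by
  have h1 := NF_geodesic l g hl hllen
  have h2 := NF_geodesic m g hm hmlen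
  exact (mkT_eq_iff F).mp (h1 ▸ h2 ▸ rfl : mkT F l = mkT F m)

lemma len_sym (x : Fin k × Bool) : len (sym k F x) = 1 := by
  have hNF : NF (sym k F x) = mulRT F x (emptyRT) := by
    have h := NF_sym_mul (F := F) x 1
    rwa [mul_one, NF_one] at h
  have hd : ¬ ∃ w, TEq F [] (pinv x :: w) := by
    rintro ⟨w, hw⟩
    have := hw.length_eq F
    simp at this
  have htl : tlen (NF (sym k F x)) = 1 := by
    rw [hNF]
    show (mulL F x []).length = 1
    rw [mulL_app F hd]
    rfl
  rw [← tlen_NF, htl]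

lemma sym_injective {x y : Fin k × Bool} (h : sym k F x = sym k F y) : x = y := by
  have h1 : wordProd k F [x] = sym k F x := by rw [wordProd_cons, wordProd_nil, mul_one]
  have h2 : wordProd k F [y] = sym k F x := by
    rw [wordProd_cons, wordProd_nil, mul_one, h]
  have hlen : len (sym k F x) = 1 := len_sym x
  have hteq := geodesics_teq h1 (by simp [hlen]) h2 (by simp [hlen])
  have hp := hteq.perm F
  have hm := List.Perm.mem_iff hp (a := x)
  simp at hm
  exact hm

end Hom

section Order

variable {k : ℕ} {F : Set (Sym2 (Fin k))}

lemma wordProd_singleton (x : Fin k × Bool) : wordProd k F [x] = sym k F x := by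
  rw [wordProd_cons, wordProd_nil, mul_one]

lemma le_refl' (g : Grp k F) : le g g := by
  unfold le
  rw [inv_mul_cancel, len_one, add_zero]

lemma le_one' (g : Grp k F) : le 1 g := by
  unfold le
  rw [inv_one, one_mul, len_one, zero_add]

lemma le_triangle (u v : Grp k F) : len v ≤ len u + len (u⁻¹ * v) := by
  have h := len_mul_le u (u⁻¹ * v)
  rwa [mul_inv_cancel_left] at h

lemma chain {u v w : Grp k F} (h1 : le u v) (h2 : le v w) :
    le u w ∧ len (u⁻¹ * w) = len (u⁻¹ * v) + len (v⁻¹ * w) := by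
  have t1 := le_triangle u w
  have t2 : len (u⁻¹ * w) ≤ len (u⁻¹ * v) + len (v⁻¹ * w) := by
    have h := len_mul_le (u⁻¹ * v) (v⁻¹ * w)
    rwa [show u⁻¹ * v * (v⁻¹ * w) = u⁻¹ * w by group] at h
  unfold le at h1 h2 ⊢
  constructor <;> omega

lemma le_trans' {u v w : Grp k F} (h1 : le u v) (h2 : le v w) : le u w :=
  (chain h1 h2).1

lemma le_translate {u v w : Grp k F} (h1 : le u v) (h2 : le v w) :
    le (u⁻¹ * v) (u⁻¹ * w) := by
  have h3 := (chain h1 h2).2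
  unfold le
  rwa [show (u⁻¹ * v)⁻¹ * (u⁻¹ * w) = v⁻¹ * w by group]

lemma le_of_split {l1 l2 : List (Fin k × Bool)} {v : Grp k F}
    (h : wordProd k F (l1 ++ l2) = v) (hlen : (l1 ++ l2).length = len v) :
    le (wordProd k F l1) v ∧ len (wordProd k F l1) = l1.length ∧
      len ((wordProd k F l1)⁻¹ * v) = l2.length := by
  set u := wordProd k F l1 with hu
  have h1 : len u ≤ l1.length := len_le rfl
  have h2 : len (u⁻¹ * v) ≤ l2.length := by
    apply len_le
    rw [← h, wordProd_append, hu, inv_mul_cancel_left]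
  have h3 := le_triangle u v
  rw [List.length_append] at hlen
  unfold le
  refine ⟨by omega, by omega, by omega⟩

lemma split_of_le {u v : Grp k F} (h : le u v) :
    ∃ l1 l2, wordProd k F l1 = u ∧ l1.length = len u ∧
      wordProd k F l2 = u⁻¹ * v ∧ l2.length = len (u⁻¹ * v) ∧
      wordProd k F (l1 ++ l2) = v ∧ (l1 ++ l2).length = len v := by
  obtain ⟨l1, h1, h1l⟩ := exists_geodesic u
  obtain ⟨l2, h2, h2l⟩ := exists_geodesic (u⁻¹ * v)
  refine ⟨l1, l2, h1, h1l, h2, h2l, ?_, ?_⟩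
  · rw [wordProd_append, h1, h2, mul_inv_cancel_left]
  · unfold le at h
    rw [List.length_append]
    omega

lemma exists_head {g : Grp k F} (hg : g ≠ 1) : ∃ x, le (sym k F x) g := by
  obtain ⟨l, hl, hlen⟩ := exists_geodesic g
  cases l with
  | nil => exact absurd hl.symm (by simpa [wordProd_nil] using hg)
  | cons x t =>
      refine ⟨x, ?_⟩
      have := (le_of_split (l1 := [x]) (l2 := t) (by simpa using hl) (by simpa using hlen)).1
      rwa [wordProd_singleton] at this

lemma word_of_len_one {l : List (Fin k × Bool)} {x : Fin k × Bool}
    (h : wordProd k F l = sym k F x) (hlen : l.length = 1) : l = [x] := by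
  obtain ⟨a, rfl⟩ := List.length_eq_one_iff.mp hlen
  rw [wordProd_singleton] at h
  rw [sym_injective h]

/-- ATOM2 : two distinct initial symbols commute and stack -/
lemma atom2 {x y : Fin k × Bool} {c : Grp k F} (hxy : x ≠ y)
    (hx : le (sym k F x) c) (hy : le (sym k F y) c) :
    Ind F x y ∧ le (sym k F x) ((sym k F y)⁻¹ * c) := by
  obtain ⟨l1, l2, hw1, hl1, hw2, hl2, hc1, hc1len⟩ := split_of_le hx
  obtain ⟨m1, m2, hv1, hm1, hv2, hm2, hc2, hc2len⟩ := split_of_le hy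
  have hl1x : l1 = [x] := word_of_len_one hw1 (by rw [hl1, len_sym])
  have hm1y : m1 = [y] := word_of_len_one hv1 (by rw [hm1, len_sym])
  subst hl1x; subst hm1y
  have hteq : TEq F (x :: l2) (y :: m2) := by
    apply geodesics_teq (g := c) (by simpa using hc1) (by simpa using hc1len)
      (by simpa using hc2) (by simpa using hc2len)
  obtain ⟨hind, w, hw, hv⟩ := teq_two_heads F hxy hteq
  refine ⟨hind, ?_⟩
  -- y :: x :: w is a geodesic word for c
  have hteq2 : TEq F (y :: m2) (y :: x :: w) := TEq.cons F y hv
  have hprod : wordProd k F (y :: x :: w) = c := by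
    rw [← hteq2.wordProd_eq]
    simpa using hc2
  have hlen2 : (y :: x :: w).length = len c := by
    rw [← hteq2.length_eq F]
    simpa using hc2len
  have hsplit := le_of_split (l1 := [y]) (l2 := x :: w) (by simpa using hprod)
    (by simpa using hlen2)
  -- now x :: w is a geodesic word for (sym y)⁻¹ * c
  have hxw : wordProd k F (x :: w) = (sym k F y)⁻¹ * c := by
    have h5 : (sym k F y)⁻¹ * c = wordProd k F (x :: w) := by
      rw [← hprod, wordProd_cons, inv_mul_cancel_left]
    exact h5.symm
  have hxwlen : (x :: w).length = len ((sym k F y)⁻¹ * c) := by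
    have := hsplit.2.2
    rw [wordProd_singleton] at this
    rw [this]
  have := (le_of_split (l1 := [x]) (l2 := w) (by simpa using hxw) (by simpa using hxwlen)).1
  rwa [wordProd_singleton] at this

/-- CORE lemma: a fresh initial letter can be pushed past `b`. -/
lemma core : ∀ n (b : Grp k F), len b ≤ n → ∀ (x : Fin k × Bool) (c : Grp k F),
    le (sym k F x) c → le b c → ¬ le (sym k F x) b →
    le b (b * sym k F x) ∧ le (b * sym k F x) c ∧ le (sym k F x) (b * sym k F x) := by
  intro n
  induction n with
  | zero =>
      intro b hb x c hxc hbc _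
      have hb1 : b = 1 := eq_one_of_len (Nat.le_zero.mp hb)
      subst hb1
      rw [one_mul]
      exact ⟨le_one' _, hxc, le_refl' _⟩
  | succ n ih =>
      intro b hb x c hxc hbc hnxb
      by_cases hb1 : b = 1
      · subst hb1
        rw [one_mul]
        exact ⟨le_one' _, hxc, le_refl' _⟩
      · obtain ⟨β, hβ⟩ := exists_head hb1
        have hxβ : x ≠ β := by
          rintro rfl
          exact hnxb hβ
        have hβc : le (sym k F β) c := le_trans' hβ hbc
        obtain ⟨hind, hxcc⟩ := atom2 hxβ hxc hβc
        set b' := (sym k F β)⁻¹ * b with hb'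
        set cc := (sym k F β)⁻¹ * c with hcc
        have hlenb : len b = 1 + len b' := by
          have := hβ
          unfold le at this
          rw [len_sym] at this
          exact this
        have hb'c : le b' cc := le_translate hβ hbc
        have hb'n : len b' ≤ n := by omega
        have hcomm : Commute (sym k F x) (sym k F β) := sym_comm hind
        have hnxb' : ¬ le (sym k F x) b' := by
          intro hle
          apply hnxb
          unfold le at hle ⊢
          rw [len_sym] at hle ⊢
          -- len ((sym k F x)⁻¹ * b) ≤ 1 + len ((sym k F x)⁻¹ * b') and triangle
          have he : (sym k F x)⁻¹ * b = (sym k F β) * ((sym k F x)⁻¹ * b') := by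
            rw [hb', show (sym k F β) * ((sym k F x)⁻¹ * ((sym k F β)⁻¹ * b)) = (sym k F β) * (sym k F x)⁻¹ * (sym k F β)⁻¹ * b by group,
              ← hcomm.inv_left.eq]
            group
          have h1 : len ((sym k F x)⁻¹ * b) ≤ 1 + len ((sym k F x)⁻¹ * b') := by
            rw [he]
            have := len_mul_le (sym k F β) ((sym k F x)⁻¹ * b')
            rwa [len_sym] at this
          have h2 := le_triangle (sym k F x) b
          rw [len_sym] at h2
          omega
        obtain ⟨ih1, ih2, ih3⟩ := ih b' hb'n x cc hxcc hb'c hnxb'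
        have hlenb's : len (b' * (sym k F x)) = len b' + 1 := by
          have := ih1
          unfold le at this
          rw [show b'⁻¹ * (b' * (sym k F x)) = (sym k F x) by group, len_sym] at this
          omega
        have hkey : (b' * (sym k F x))⁻¹ * cc = (b * (sym k F x))⁻¹ * c := by
          rw [hb', hcc]
          group
        have hlencc : len c = 1 + len cc := by
          have := hβc
          unfold le at this
          rw [len_sym] at this
          exact this
        have hih2 : len cc = len (b' * (sym k F x)) + len ((b * (sym k F x))⁻¹ * c) := by
          have := ih2
          unfold le at this
          rwa [hkey] at this
        have htri : len c ≤ len (b * (sym k F x)) + len ((b * (sym k F x))⁻¹ * c) := le_triangle _ _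
        have hble : len (b * (sym k F x)) ≤ len b + 1 := by
          have := len_mul_le b (sym k F x)
          rwa [len_sym] at this
        have hlenbs : len (b * (sym k F x)) = len b + 1 := by omega
        have hle2 : le (b * (sym k F x)) c := by
          unfold le
          omega
        have hle1 : le b (b * (sym k F x)) := by
          unfold le
          rw [show b⁻¹ * (b * (sym k F x)) = (sym k F x) by group, len_sym]
          omega
        refine ⟨hle1, hle2, ?_⟩
        -- le (sym k F x) (b * (sym k F x))
        have hih3 : len ((sym k F x)⁻¹ * (b' * (sym k F x))) = len b' := by
          have := ih3
          unfold le at this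
          rw [len_sym] at this
          omega
        have he2 : (sym k F x)⁻¹ * (b * (sym k F x)) = (sym k F β) * ((sym k F x)⁻¹ * (b' * (sym k F x))) := by
          rw [hb', show (sym k F β) * ((sym k F x)⁻¹ * ((sym k F β)⁻¹ * b * (sym k F x))) = (sym k F β) * (sym k F x)⁻¹ * ((sym k F β)⁻¹ * b * (sym k F x)) by group,
            ← hcomm.inv_left.eq]
          group
        have h3 : len ((sym k F x)⁻¹ * (b * (sym k F x))) ≤ 1 + len b' := by
          rw [he2, ← hih3]
          have := len_mul_le (sym k F β) ((sym k F x)⁻¹ * (b' * (sym k F x)))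
          rwa [len_sym] at this
        have h4 := le_triangle (sym k F x) (b * (sym k F x))
        rw [len_sym] at h4
        unfold le
        rw [len_sym]
        omega

lemma sym_ne_one (x : Fin k × Bool) : sym k F x ≠ 1 := by
  intro h
  have h1 := len_sym (F := F) x
  rw [h, len_one] at h1
  exact one_ne_zero h1.symm

lemma lift_letter {x γ : Fin k × Bool} {a : Grp k F} (hind : Ind F x γ)
    (hxa : le (sym k F x) a) (hγ : le (sym k F γ) ((sym k F x)⁻¹ * a)) :
    le (sym k F γ) a := by
  have hc : Commute (sym k F x) (sym k F γ) := sym_comm hind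
  have he : (sym k F γ)⁻¹ * a = sym k F x * ((sym k F γ)⁻¹ * ((sym k F x)⁻¹ * a)) := by
    rw [show sym k F x * ((sym k F γ)⁻¹ * ((sym k F x)⁻¹ * a))
        = sym k F x * (sym k F γ)⁻¹ * ((sym k F x)⁻¹ * a) by group, hc.inv_right.eq]
    group
  have h1 : len ((sym k F γ)⁻¹ * a) ≤ 1 + len ((sym k F γ)⁻¹ * ((sym k F x)⁻¹ * a)) := by
    rw [he]
    have := len_mul_le (sym k F x) ((sym k F γ)⁻¹ * ((sym k F x)⁻¹ * a))
    rwa [len_sym] at this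
  have h2 := le_triangle (sym k F γ) a
  unfold le at hxa hγ ⊢
  rw [len_sym] at hxa hγ h2 ⊢
  omega

lemma trivmeet_step {a b c : Grp k F} {x : Fin k × Bool}
    (hxa : le (sym k F x) a) (hac : le a c) (hbc : le b c)
    (htriv : ∀ w, le w a → le w b → w = 1) :
    ∀ w, le w ((sym k F x)⁻¹ * a) → le w ((sym k F x)⁻¹ * (b * sym k F x)) → w = 1 := by
  intro w hwa hwb
  by_contra hw1
  obtain ⟨γ, hγ⟩ := exists_head hw1
  have hγa' : le (sym k F γ) ((sym k F x)⁻¹ * a) := le_trans' hγ hwa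
  have hγb' : le (sym k F γ) ((sym k F x)⁻¹ * (b * sym k F x)) := le_trans' hγ hwb
  have hxc : le (sym k F x) c := le_trans' hxa hac
  have hnxb : ¬ le (sym k F x) b := by
    intro h
    exact sym_ne_one x (htriv _ hxa h)
  obtain ⟨hb_bs, _, hx_bs⟩ := core (len b) b le_rfl x c hxc hbc hnxb
  -- lb ++ [x] geodesic of b * sym x
  obtain ⟨lb, ls, hlb, hlbl, hls, hlsl, hprod, hprodlen⟩ := split_of_le hb_bs
  have hlsid : b⁻¹ * (b * sym k F x) = sym k F x := by group
  have hlsx : ls = [x] := by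
    apply word_of_len_one (by rw [hls, hlsid])
    rw [hlsl, hlsid, len_sym]
  subst hlsx
  -- [x] ++ l1 geodesic of b * sym x, wordProd l1 = bhat
  obtain ⟨m1, l1, hm1, hm1l, hl1, hl1l, hprod2, hprod2len⟩ := split_of_le hx_bs
  have hm1x : m1 = [x] := word_of_len_one hm1 (by rw [hm1l, len_sym])
  subst hm1x
  -- [γ] ++ l2 geodesic of bhat
  obtain ⟨g1, l2, hg1, hg1l, hl2, hl2l, hprod3, hprod3len⟩ := split_of_le hγb'
  have hg1γ : g1 = [γ] := word_of_len_one hg1 (by rw [hg1l, len_sym])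
  subst hg1γ
  rw [List.singleton_append] at hprod3 hprod3len
  -- x :: γ :: l2 is a geodesic word of b * sym x
  have hp4 : wordProd k F (x :: γ :: l2) = b * sym k F x := by
    rw [wordProd_cons, hprod3, mul_inv_cancel_left]
  have hbsl : len (b * sym k F x) = 1 + len ((sym k F x)⁻¹ * (b * sym k F x)) := by
    have := hx_bs
    unfold le at this
    rw [len_sym] at this
    exact this
  have hp4len : (x :: γ :: l2).length = len (b * sym k F x) := by
    simp only [List.length_cons]
    rw [List.length_cons] at hprod3len
    omega
  have hteq : TEq F (lb ++ [x]) (x :: γ :: l2) :=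
    geodesics_teq hprod hprodlen hp4 hp4len
  rcases head_of_append F lb [x] (γ :: l2) hteq with ⟨u', hu'⟩ | ⟨hall, _⟩
  · -- then sym x ≤ b, contradiction
    have hpu : wordProd k F (x :: u') = b := by rw [← hu'.wordProd_eq, hlb]
    have hlenu : (x :: u').length = len b := by rw [← hu'.length_eq F, hlbl]
    have := (le_of_split (l1 := [x]) (l2 := u') (by simpa using hpu)
      (by simpa using hlenu)).1
    rw [wordProd_singleton] at this
    exact hnxb this
  · have hmid : TEq F (lb ++ [x]) (x :: lb) := by
      have := teq_middle F lb [] hall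
      simpa using this
    have hcan : TEq F lb (γ :: l2) := teq_cancel F ((hmid.symm F).trans F hteq)
    have hpb : wordProd k F (γ :: l2) = b := by rw [← hcan.wordProd_eq, hlb]
    have hlb2 : (γ :: l2).length = len b := by rw [← hcan.length_eq F, hlbl]
    have hγb : le (sym k F γ) b := by
      have := (le_of_split (l1 := [γ]) (l2 := l2) (by simpa using hpb)
        (by simpa using hlb2)).1
      rwa [wordProd_singleton] at this
    have hγmem : γ ∈ lb := ((hcan.perm F).mem_iff).mpr List.mem_cons_self
    have hind := hall γ hγmem
    have hγa := lift_letter hind hxa hγa'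
    exact sym_ne_one γ (htriv _ hγa hγb)

lemma main' : ∀ n (a : Grp k F), len a ≤ n → ∀ b c, le a c → le b c →
    (∀ w, le w a → le w b → w = 1) → le a (b⁻¹ * c) := by
  intro n
  induction n with
  | zero =>
      intro a ha b c _ _ _
      have : a = 1 := eq_one_of_len (Nat.le_zero.mp ha)
      subst this
      exact le_one' _
  | succ n ih =>
      intro a ha b c hac hbc htriv
      by_cases ha1 : a = 1
      · subst ha1; exact le_one' _
      · obtain ⟨x, hxa⟩ := exists_head ha1
        have hxc : le (sym k F x) c := le_trans' hxa hac
        have hnxb : ¬ le (sym k F x) b := by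
          intro h
          exact sym_ne_one x (htriv _ hxa h)
        obtain ⟨hb_bs, hbs_c, hx_bs⟩ := core (len b) b le_rfl x c hxc hbc hnxb
        have hsxd : le (sym k F x) (b⁻¹ * c) := by
          have := le_translate hb_bs hbs_c
          rwa [show b⁻¹ * (b * sym k F x) = sym k F x by group] at this
        have hacc : le ((sym k F x)⁻¹ * a) ((sym k F x)⁻¹ * c) := le_translate hxa hac
        -- bhat := sx⁻¹ * (b * sx) ≤ cc
        have hlenbs : len (b * sym k F x) = len b + 1 := by
          have := hb_bs
          unfold le at this
          rw [show b⁻¹ * (b * sym k F x) = sym k F x by group, len_sym] at this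
          omega
        have hbsl : len (b * sym k F x)
            = 1 + len ((sym k F x)⁻¹ * (b * sym k F x)) := by
          have := hx_bs
          unfold le at this
          rw [len_sym] at this
          exact this
        have hbhat : len ((sym k F x)⁻¹ * (b * sym k F x)) = len b := by omega
        have hkey : ((sym k F x)⁻¹ * (b * sym k F x))⁻¹ * ((sym k F x)⁻¹ * c)
            = (sym k F x)⁻¹ * (b⁻¹ * c) := by group
        have hbhatc : le ((sym k F x)⁻¹ * (b * sym k F x)) ((sym k F x)⁻¹ * c) := by
          unfold le
          rw [hkey, hbhat]
          have h1 : len c = len (sym k F x) + len ((sym k F x)⁻¹ * c) := hxc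
          have h2 : len c = len b + len (b⁻¹ * c) := hbc
          have h3 : len (b⁻¹ * c) = len (sym k F x) + len ((sym k F x)⁻¹ * (b⁻¹ * c)) := hsxd
          rw [len_sym] at h1 h3
          omega
        have htriv' := trivmeet_step hxa hac hbc htriv
        have hlena : len a = 1 + len ((sym k F x)⁻¹ * a) := by
          have := hxa
          unfold le at this
          rw [len_sym] at this
          exact this
        have hn' : len ((sym k F x)⁻¹ * a) ≤ n := by omega
        have hih := ih ((sym k F x)⁻¹ * a) hn' ((sym k F x)⁻¹ * (b * sym k F x))
          ((sym k F x)⁻¹ * c) hacc hbhatc htriv'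
        -- reassemble
        unfold le at hih hsxd ⊢
        rw [len_sym] at hsxd
        rw [hkey] at hih
        rw [show ((sym k F x)⁻¹ * a)⁻¹ * ((sym k F x)⁻¹ * (b⁻¹ * c))
            = a⁻¹ * (b⁻¹ * c) by group] at hih
        omega

end Order

/-- if `x ≤ z` and `y ≤ z`, then `(x ∧ y)⁻¹x ≤ y⁻¹z`. -/
theorem stmt2 {k : ℕ} (hk : 1 ≤ k) {F : Set (Sym2 (Fin k))} (x y z : Grp k F)
    (hxz : le x z) (hyz : le y z)
    (m : Grp k F) (hm : IsMeet x y m) :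
    le (m⁻¹ * x) (y⁻¹ * z) := by
  obtain ⟨hmx, hmy, hmmax⟩ := hm
  have hac : le (m⁻¹ * x) (m⁻¹ * z) := le_translate hmx hxz
  have hbc : le (m⁻¹ * y) (m⁻¹ * z) := le_translate hmy hyz
  have htriv : ∀ w, le w (m⁻¹ * x) → le w (m⁻¹ * y) → w = 1 := by
    intro w hwa hwb
    have e1 : (m * w)⁻¹ * x = w⁻¹ * (m⁻¹ * x) := by group
    have e2 : (m * w)⁻¹ * y = w⁻¹ * (m⁻¹ * y) := by group
    have t1 := le_triangle (m * w) x
    have t2 := le_triangle (m * w) y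
    have t3 := len_mul_le m w
    unfold le at hwa hwb hmx hmy
    rw [e1] at t1
    rw [e2] at t2
    have hle1 : le (m * w) x := by unfold le; rw [e1]; omega
    have hle2 : le (m * w) y := by unfold le; rw [e2]; omega
    have hlemw : len (m * w) = len m + len w := by omega
    have hlem := hmmax (m * w) hle1 hle2
    unfold le at hlem
    rw [show (m * w)⁻¹ * m = w⁻¹ by group] at hlem
    exact eq_one_of_len (by omega)
  have h := main' (len (m⁻¹ * x)) (m⁻¹ * x) le_rfl (m⁻¹ * y) (m⁻¹ * z) hac hbc htriv
  rwa [show (m⁻¹ * y)⁻¹ * (m⁻¹ * z) = y⁻¹ * z by group] at h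
end GraphGroupPaper
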